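/- Let (Φ_t)_{t≥0} be a quantum dynamical semigroup on B(H) with GKLS generator L(X) = i[H₀,X] + Σ_k (L_k* X L_k − ½{L_k*L_k, X}). Then the decoherence-free algebra N of the semigroup is contained in {X ∈ B(H) | Φ_t(X) = e^{itH₀} X e^{−itH₀} for all t ≥ 0}. -/

import Mathlib

abbrev HS (n : ℕ) := EuclideanSpace ℂ (Fin n)
abbrev BH (n : ℕ) := HS n →L[ℂ] HS n

/-- `Lgen` is a GKLS generator with (effective) Hamiltonian `H₀` and jump operators `L`. -/
def IsGKLS {n m : ℕ} (Lgen : Module.End ℂ (BH n)) (H₀ : BH n) (L : Fin m → BH n) : Prop :=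
  IsSelfAdjoint H₀ ∧ ∀ X : BH n,
    Lgen X = Complex.I • (H₀ * X - X * H₀) +
      ∑ k, (star (L k) * X * L k -
        (2⁻¹ : ℂ) • (star (L k) * L k * X + X * (star (L k) * L k)))

set_option maxHeartbeats 1000000
set_option synthInstance.maxHeartbeats 400000

open NormedSpace Set

instance (n : ℕ) : ContinuousStar (BH n) :=
  ⟨(ContinuousLinearMap.adjoint (𝕜 := ℂ) (E := HS n) (F := HS n)).continuous⟩

/-- Star of a commutator. -/
lemma aux_star_factor {n : ℕ} (P Q : BH n) :
    star (P * Q - Q * P) = star Q * star P - star P * star Q :=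
  (star_sub (R := BH n) _ _).trans
    (by rw [star_mul (R := BH n), star_mul (R := BH n)])

/-- Star of a commutator with an adjoint. -/
lemma aux_star_factor' {n : ℕ} (P Q : BH n) :
    star (star P * Q - Q * star P) = star Q * P - P * star Q :=
  (aux_star_factor (star P) Q).trans (by rw [star_star (R := BH n)])

instance (n : ℕ) : SMulCommClass ℝ (BH n) (BH n) :=
  ⟨fun r x y => by ext v; simp [ContinuousLinearMap.mul_apply]⟩

instance (n : ℕ) : IsScalarTower ℝ (BH n) (BH n) :=
  ⟨fun r x y => by ext v; simp [ContinuousLinearMap.mul_apply]⟩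

/-- If a finite sum of operators `star (C k) * C k` vanishes, each `C k` vanishes. -/
lemma aux_sum_star_mul_self {n m : ℕ} {C : Fin m → BH n}
    (h : ∑ k, star (C k) * C k = 0) (k : Fin m) : C k = 0 := by
  have key : ∀ v : HS n, ∑ j, ‖(C j) v‖ ^ 2 = (0:ℝ) := by
    intro v
    have h1 : (inner ℂ ((∑ j, star (C j) * C j) v) v : ℂ) = 0 := by rw [h]; simp
    have h2 : (inner ℂ ((∑ j, star (C j) * C j) v) v : ℂ)
        = ((∑ j, ‖(C j) v‖ ^ 2 : ℝ) : ℂ) := by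
      rw [ContinuousLinearMap.sum_apply, sum_inner]
      push_cast
      refine Finset.sum_congr rfl fun j _ => ?_
      rw [Function.comp_apply, ContinuousLinearMap.star_eq_adjoint,
        ContinuousLinearMap.adjoint_inner_left, inner_self_eq_norm_sq_to_K]
      norm_num
    exact_mod_cast h2 ▸ h1
  refine ContinuousLinearMap.ext fun v => ?_
  rw [ContinuousLinearMap.zero_apply]
  have h3 := key v
  have h4 : ∀ j ∈ Finset.univ, (0:ℝ) ≤ ‖(C j) v‖ ^ 2 := fun j _ => sq_nonneg _
  have := (Finset.sum_eq_zero_iff_of_nonneg h4).mp h3 k (Finset.mem_univ k)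
  simpa [pow_eq_zero_iff] using this

/-- Uniqueness of one-sided derivatives from agreement on a right neighbourhood. -/
lemma aux_deriv_unique_Ici {n : ℕ} {f g : ℝ → BH n} {f' g' : BH n} {t : ℝ}
    (heq : ∀ s, t ≤ s → f s = g s)
    (hf : HasDerivAt f f' t) (hg : HasDerivAt g g' t) : f' = g' := by
  have h1 : HasDerivWithinAt f f' (Ici t) t := hf.hasDerivWithinAt
  have h2 : HasDerivWithinAt f g' (Ici t) t :=
    (hg.hasDerivWithinAt).congr (fun s hs => heq s hs) (heq t le_rfl)
  have hu : UniqueDiffWithinAt ℝ (Ici t) t := uniqueDiffOn_Ici t t self_mem_Ici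
  rw [← h1.derivWithin hu, ← h2.derivWithin hu]

/-- The GKLS generator commutes with the adjoint operation. -/
lemma aux_Lgen_star {n m : ℕ} {Lgen : Module.End ℂ (BH n)} {H₀ : BH n} {L : Fin m → BH n}
    (h : IsGKLS Lgen H₀ L) (A : BH n) : Lgen (star A) = star (Lgen A) := by
  rw [h.2, h.2, star_add (R := BH n), star_smul, star_sub, star_mul, star_mul, star_sum]
  rw [h.1.star_eq]
  congr 1
  · rw [Complex.star_def, Complex.conj_I]; module
  · refine Finset.sum_congr rfl fun k _ => ?_
    simp only [star_sub, star_smul, star_add, star_mul, star_star, mul_assoc,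
      Complex.star_def, map_inv₀, Complex.conj_ofNat]
    rw [add_comm]

/-- Per-jump-operator dissipator identity. -/
lemma aux_perk {n : ℕ} (J A B : BH n) :
    (star J * (A * B) * J - (2⁻¹ : ℂ) • (star J * J * (A * B) + (A * B) * (star J * J)))
      - (star J * A * J - (2⁻¹ : ℂ) • (star J * J * A + A * (star J * J))) * B
      - A * (star J * B * J - (2⁻¹ : ℂ) • (star J * J * B + B * (star J * J)))
      = (star J * A - A * star J) * (B * J - J * B) := by
  simp only [mul_add, add_mul, mul_sub, sub_mul, smul_add, smul_sub, smul_mul_assoc,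
    mul_smul_comm, mul_assoc]
  module

/-- The derivation defect of a GKLS generator. -/
lemma aux_defect {n m : ℕ} {Lgen : Module.End ℂ (BH n)} {H₀ : BH n} {L : Fin m → BH n}
    (h : IsGKLS Lgen H₀ L) (A B : BH n) :
    Lgen (A * B) - Lgen A * B - A * Lgen B
      = ∑ k, (star (L k) * A - A * star (L k)) * (B * L k - L k * B) := by
  rw [h.2 (A*B), h.2 A, h.2 B, add_mul, mul_add, Finset.sum_mul, Finset.mul_sum]
  have hsum : ∑ k, (star (L k) * A - A * star (L k)) * (B * L k - L k * B)
      = (∑ k, (star (L k) * (A*B) * (L k) - (2⁻¹ : ℂ) • (star (L k) * (L k) * (A*B) + (A*B) * (star (L k) * (L k)))))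
        - (∑ k, (star (L k) * A * (L k) - (2⁻¹ : ℂ) • (star (L k) * (L k) * A + A * (star (L k) * (L k)))) * B)
        - (∑ k, A * (star (L k) * B * (L k) - (2⁻¹ : ℂ) • (star (L k) * (L k) * B + B * (star (L k) * (L k))))) := by
    rw [← Finset.sum_sub_distrib, ← Finset.sum_sub_distrib]
    exact Finset.sum_congr rfl fun k _ => (aux_perk (L k) A B).symm
  rw [hsum]
  have hham : Complex.I • (H₀ * (A * B) - (A * B) * H₀)
      = (Complex.I • (H₀ * A - A * H₀)) * B + A * (Complex.I • (H₀ * B - B * H₀)) := by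
    simp only [smul_mul_assoc, mul_smul_comm, mul_sub, sub_mul, mul_assoc]
    module
  rw [hham]
  abel

/-- Uniqueness of solutions of the linear ODE given by an endomorphism, on `[0, ∞)`. -/
lemma aux_ode_unique {n : ℕ} (T : Module.End ℂ (BH n)) (f g : ℝ → BH n)
    (hf : Continuous f) (hg : Continuous g)
    (hf' : ∀ t, 0 ≤ t → HasDerivAt f (T (f t)) t)
    (hg' : ∀ t, 0 ≤ t → HasDerivAt g (T (g t)) t)
    (h0 : f 0 = g 0) : ∀ t, 0 ≤ t → f t = g t := by
  intro t ht
  set T' := LinearMap.toContinuousLinearMap (T : BH n →ₗ[ℂ] BH n) with hT'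
  have hlip : ∀ s : ℝ, LipschitzWith ‖T'‖₊ (fun x : BH n => T x) := fun s => T'.lipschitz
  exact ODE_solution_unique hlip hf.continuousOn
    (fun s hs => ((hf' s hs.1).hasDerivWithinAt))
    hg.continuousOn (fun s hs => ((hg' s hs.1).hasDerivWithinAt)) h0 ⟨ht, le_rfl⟩

/-- Derivative of the Heisenberg-picture unitary conjugation. -/
lemma aux_unitary_deriv {n : ℕ} (X K : BH n) (s : ℝ) :
    HasDerivAt (fun u : ℝ => exp (u • K) * X * exp (u • (-K)))
      (K * (exp (s • K) * X * exp (s • (-K)))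
        - (exp (s • K) * X * exp (s • (-K))) * K) s := by
  have h1 : HasDerivAt (fun u : ℝ => exp (u • K)) (K * exp (s • K)) s :=
    hasDerivAt_exp_smul_const' K s
  have h2 : HasDerivAt (fun u : ℝ => exp (u • (-K))) ((-K) * exp (s • (-K))) s :=
    hasDerivAt_exp_smul_const' (-K) s
  have h3 : HasDerivAt (fun u : ℝ => exp (u • K) * X * exp (u • (-K))) _ s :=
    (h1.mul_const X).mul h2
  have hcm : K * exp (s • (-K)) = exp (s • (-K)) * K :=
    (((Commute.refl K).neg_right.smul_right s).exp_right).eq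
  convert h3 using 1
  have e1 : (-K) * exp (s • (-K)) = -(exp (s • (-K)) * K) :=
    (neg_mul (α := BH n) K _).trans (congrArg Neg.neg hcm)
  rw [e1]
  have e2 : exp (s • K) * X * (-(exp (s • (-K)) * K))
      = -(exp (s • K) * X * (exp (s • (-K)) * K)) := mul_neg (α := BH n) _ _
  rw [e2, ← mul_assoc (exp (s • K) * X), ← mul_assoc K, ← mul_assoc K]
  exact sub_eq_add_neg _ _

/-- For a quantum dynamical semigroup with GKLS generator, the decoherence-free
algebra is contained in the set of observables evolving by the Hamiltonian
unitary conjugation generated by H₀. -/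
theorem decFree_subset_hamiltonian_evolution {n m : ℕ}
    (Φ : ℝ → Module.End ℂ (BH n)) (Lgen : Module.End ℂ (BH n))
    (H₀ : BH n) (L : Fin m → BH n)
    (hGKLS : IsGKLS Lgen H₀ L)
    (hΦ0 : Φ 0 = LinearMap.id)
    (hderiv : ∀ (X : BH n) (t : ℝ), HasDerivAt (fun s => Φ s X) (Lgen (Φ t X)) t)
    (X : BH n)
    (hX : ∀ t : ℝ, 0 ≤ t → ∀ Y : BH n,
      Φ t (Y * X) = Φ t Y * Φ t X ∧ Φ t (X * Y) = Φ t X * Φ t Y) :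
    ∀ t : ℝ, 0 ≤ t →
      Φ t X = NormedSpace.exp ((Complex.I * (t : ℂ)) • H₀) * X *
        NormedSpace.exp ((-(Complex.I * (t : ℂ))) • H₀) := by
  have hΦcont : ∀ Y : BH n, Continuous fun s : ℝ => Φ s Y := fun Y =>
    continuous_iff_continuousAt.mpr fun s => (hderiv Y s).continuousAt
  -- star preservation
  have hstar : ∀ s : ℝ, 0 ≤ s → Φ s (star X) = star (Φ s X) := by
    refine aux_ode_unique Lgen _ _ (hΦcont (star X)) (hΦcont X).star
      (fun s _ => hderiv (star X) s) (fun s _ => ?_) (by simp [hΦ0])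
    have := (hderiv X s).star
    rwa [← aux_Lgen_star hGKLS] at this
  -- commutation relations at each time s ≥ 0
  have hcomm : ∀ s : ℝ, 0 ≤ s →
      (∀ k, Φ s X * L k = L k * Φ s X) ∧
      (∀ k, star (L k) * Φ s X = Φ s X * star (L k)) := by
    intro s hs
    set B := Φ s X with hB
    -- derivation identities at s
    have hd1 : ∀ Y : BH n,
        Lgen (Φ s Y * B) = Lgen (Φ s Y) * B + Φ s Y * Lgen B := by
      intro Y
      have := aux_deriv_unique_Ici
        (f := fun u => Φ u (Y * X)) (g := fun u => Φ u Y * Φ u X)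
        (fun u hu => (hX u (le_trans hs hu) Y).1)
        (hderiv (Y * X) s) ((hderiv Y s).mul (hderiv X s))
      rwa [(hX s hs Y).1] at this
    have hd2 : ∀ Y : BH n,
        Lgen (B * Φ s Y) = Lgen B * Φ s Y + B * Lgen (Φ s Y) := by
      intro Y
      have := aux_deriv_unique_Ici
        (f := fun u => Φ u (X * Y)) (g := fun u => Φ u X * Φ u Y)
        (fun u hu => (hX u (le_trans hs hu) Y).2)
        (hderiv (X * Y) s) ((hderiv X s).mul (hderiv Y s))
      rwa [(hX s hs Y).2] at this
    have hsA : Φ s (star X) = star B := hstar s hs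
    constructor
    · -- B commutes with L k
      intro k
      have hzero : ∑ j, (star (L j) * star B - star B * star (L j)) * (B * L j - L j * B)
          = 0 := by
        rw [← aux_defect hGKLS (star B) (B := B), ← hsA, hd1 (star X), hsA]
        abel
      have hzero' : ∑ j, star (B * L j - L j * B) * (B * L j - L j * B) = 0 := by
        rw [← hzero]
        exact Finset.sum_congr rfl fun j _ =>
          congrArg (· * (B * L j - L j * B)) (aux_star_factor B (L j))
      exact sub_eq_zero.mp (aux_sum_star_mul_self hzero' k)
    · -- B commutes with star (L k)
      intro k
      have hzero : ∑ j, (star (L j) * B - B * star (L j)) * (star B * L j - L j * star B)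
          = 0 := by
        rw [← aux_defect hGKLS B (B := star B), ← hsA, hd2 (star X), hsA]
        abel
      have hzero' : ∑ j,
          star (star (star (L j) * B - B * star (L j)))
            * star (star (L j) * B - B * star (L j)) = 0 := by
        rw [← hzero]
        exact Finset.sum_congr rfl fun j _ =>
          congrArg₂ (· * ·) (star_star (R := BH n) _) (aux_star_factor' (L j) B)
      exact sub_eq_zero.mp (star_eq_zero.mp (aux_sum_star_mul_self hzero' k))
  -- the generator acts on Φ s X as the Hamiltonian commutator
  have key : ∀ s : ℝ, 0 ≤ s →
      Lgen (Φ s X) = Complex.I • (H₀ * Φ s X - Φ s X * H₀) := by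
    intro s hs
    obtain ⟨hBL, hBsL⟩ := hcomm s hs
    set B := Φ s X with hB
    rw [hGKLS.2]
    have hdiss : ∀ k : Fin m, star (L k) * B * L k -
        (2⁻¹ : ℂ) • (star (L k) * L k * B + B * (star (L k) * L k)) = 0 := by
      intro k
      have e1 : star (L k) * B * L k = star (L k) * L k * B := by
        rw [mul_assoc, hBL k, ← mul_assoc]
      have e2 : B * (star (L k) * L k) = star (L k) * L k * B := by
        rw [← mul_assoc, ← hBsL k, mul_assoc, hBL k, ← mul_assoc]
      rw [e1, e2]
      rw [show star (L k) * L k * B + star (L k) * L k * B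
          = (2:ℂ) • (star (L k) * L k * B) from (two_smul ℂ _).symm, smul_smul]
      norm_num
    rw [Finset.sum_eq_zero fun k _ => hdiss k, add_zero]
  -- compare with the unitary evolution via ODE uniqueness
  intro t ht
  set K : BH n := Complex.I • H₀ with hK
  set T : Module.End ℂ (BH n) :=
    Complex.I • (LinearMap.mulLeft ℂ H₀ - LinearMap.mulRight ℂ H₀) with hT
  have hTapp : ∀ A : BH n, T A = Complex.I • (H₀ * A - A * H₀) := fun A => by
    simp [hT, LinearMap.mulLeft_apply, LinearMap.mulRight_apply]
  have hKg : ∀ A : BH n, T A = K * A - A * K := by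
    intro A
    calc T A = Complex.I • (H₀ * A - A * H₀) := hTapp A
      _ = Complex.I • (H₀ * A) - Complex.I • (A * H₀) := smul_sub _ _ _
      _ = K * A - A * K := by
          rw [hK]
          exact congrArg₂ (· - ·) (smul_mul_assoc _ _ _).symm (mul_smul_comm _ _ _).symm
  set g : ℝ → BH n := fun u => exp (u • K) * X * exp (u • (-K)) with hg
  have hgderiv : ∀ s : ℝ, HasDerivAt g (T (g s)) s := by
    intro s
    rw [hKg]
    exact aux_unitary_deriv X K s
  have hfderiv : ∀ s : ℝ, 0 ≤ s → HasDerivAt (fun u => Φ u X) (T (Φ s X)) s := by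
    intro s hs
    rw [hTapp, ← key s hs]
    exact hderiv X s
  have hgcont : Continuous g :=
    continuous_iff_continuousAt.mpr fun s => (hgderiv s).continuousAt
  have h0 : Φ 0 X = g 0 := by
    show Φ 0 X = exp ((0:ℝ) • K) * X * exp ((0:ℝ) • -K)
    rw [hΦ0, zero_smul ℝ K, zero_smul ℝ (-K), exp_zero, one_mul, mul_one]
    rfl
  have := aux_ode_unique T (fun u => Φ u X) g (hΦcont X) hgcont hfderiv
    (fun s _ => hgderiv s) h0 t ht
  have e1 : t • K = (Complex.I * (t : ℂ)) • H₀ := by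
    rw [hK, ← smul_assoc, Complex.real_smul, mul_comm]
  have e2 : t • (-K) = (-(Complex.I * (t : ℂ))) • H₀ :=
    (smul_neg t K).trans ((congrArg Neg.neg e1).trans (neg_smul _ _).symm)
  refine this.trans ?_
  show exp (t • K) * X * exp (t • (-K)) = _
  rw [e1, e2]
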